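/- Let y : ℝ^ℓ → ℝ^n be differentiable at x, let L : ℝ^n → ℝ be differentiable at y(x), and let dy = ∇L(y(x)) ≠ 0. Define φ(ξ) = ‖y(x - ξ) - y(x) + dy‖. Then φ is differentiable at 0 and its derivative at 0 in direction v equals -(1/‖dy‖) · ⟨∇(L ∘ y)(x), v⟩; in particular the directional derivative of φ at 0 is minimized (over unit vectors) in the direction ∇(L ∘ y)(x) / ‖∇(L ∘ y)(x)‖ when ∇(L ∘ y)(x) ≠ 0. -/

import Mathlib

open scoped RealInnerProductSpace

lemma my_hasFDerivAt_norm {F : Type*} [NormedAddCommGroup F] [InnerProductSpace ℝ F]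
    {a : F} (ha : a ≠ 0) :
    HasFDerivAt (fun z : F => ‖z‖) (‖a‖⁻¹ • (innerSL ℝ a : F →L[ℝ] ℝ)) a := by
  have hna : (0:ℝ) < ‖a‖ := norm_pos_iff.2 ha
  have h1 : HasFDerivAt (fun z : F => ‖z‖ ^ 2) (2 • (innerSL ℝ a)) a :=
    (hasStrictFDerivAt_norm_sq a).hasFDerivAt
  have h2 : HasDerivAt Real.sqrt (1 / (2 * Real.sqrt (‖a‖ ^ 2))) (‖a‖ ^ 2) :=
    Real.hasDerivAt_sqrt (by positivity)
  have h3 := h2.comp_hasFDerivAt a h1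
  have heq : Real.sqrt ∘ (fun z : F => ‖z‖ ^ 2) = fun z : F => ‖z‖ := by
    funext z; simp [Function.comp, Real.sqrt_sq (norm_nonneg z)]
  rw [heq] at h3
  refine h3.congr_fderiv ?_
  symm
  rw [Real.sqrt_sq (norm_nonneg a)]
  ext v
  simp [ContinuousLinearMap.smul_apply]
  field_simp

theorem stmt0 {l n : ℕ} (x : EuclideanSpace ℝ (Fin l))
    (y : EuclideanSpace ℝ (Fin l) → EuclideanSpace ℝ (Fin n))
    (L : EuclideanSpace ℝ (Fin n) → ℝ)
    (hy : DifferentiableAt ℝ y x) (hL : DifferentiableAt ℝ L (y x))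
    (hdy : gradient L (y x) ≠ 0) :
    ∃ f' : EuclideanSpace ℝ (Fin l) →L[ℝ] ℝ,
      HasFDerivAt (fun ξ => ‖y (x - ξ) - y x + gradient L (y x)‖) f' 0 ∧
      (∀ v, f' v = -(1 / ‖gradient L (y x)‖) * ⟪gradient (fun ξ => L (y ξ)) x, v⟫) ∧
      (gradient (fun ξ => L (y ξ)) x ≠ 0 →
        ∀ v : EuclideanSpace ℝ (Fin l), ‖v‖ = 1 →
          f' ((‖gradient (fun ξ => L (y ξ)) x‖)⁻¹ • gradient (fun ξ => L (y ξ)) x) ≤ f' v) := by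
  set dy := gradient L (y x) with hdydef
  set g := gradient (fun ξ => L (y ξ)) x with hgdef
  have hsub : HasFDerivAt (fun ξ : EuclideanSpace ℝ (Fin l) => x - ξ)
      (-(ContinuousLinearMap.id ℝ (EuclideanSpace ℝ (Fin l)))) 0 := by
    simpa using (hasFDerivAt_id (0 : EuclideanSpace ℝ (Fin l))).const_sub x
  have hyc : HasFDerivAt (fun ξ : EuclideanSpace ℝ (Fin l) => y (x - ξ))
      ((fderiv ℝ y x).comp (-(ContinuousLinearMap.id ℝ _))) 0 :=
    HasFDerivAt.comp 0 (by simpa using hy.hasFDerivAt) hsub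
  have hG : HasFDerivAt (fun ξ : EuclideanSpace ℝ (Fin l) => y (x - ξ) - y x + dy)
      ((fderiv ℝ y x).comp (-(ContinuousLinearMap.id ℝ _))) 0 := by
    simpa using (hyc.sub_const (y x)).add_const dy
  have hnorm := my_hasFDerivAt_norm hdy
  have hcomp : HasFDerivAt (fun ξ => ‖y (x - ξ) - y x + dy‖)
      ((‖dy‖⁻¹ • (innerSL ℝ dy)).comp ((fderiv ℝ y x).comp (-(ContinuousLinearMap.id ℝ _)))) 0 :=
    HasFDerivAt.comp 0 (by simpa using hnorm) hG
  have hn : (0:ℝ) < ‖dy‖ := norm_pos_iff.2 hdy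
  have hform : ∀ v, ((‖dy‖⁻¹ • (innerSL ℝ dy)).comp
      ((fderiv ℝ y x).comp (-(ContinuousLinearMap.id ℝ _)))) v = -(1 / ‖dy‖) * ⟪g, v⟫ := by
    have hgrad : ∀ v, ⟪g, v⟫ = fderiv ℝ (fun ξ => L (y ξ)) x v := by
      intro v
      simp [hgdef, gradient, InnerProductSpace.toDual_symm_apply]
    have hgradL : ∀ w, ⟪dy, w⟫ = fderiv ℝ L (y x) w := by
      intro w
      simp [hdydef, gradient, InnerProductSpace.toDual_symm_apply]
    have hchain : fderiv ℝ (fun ξ => L (y ξ)) x = (fderiv ℝ L (y x)).comp (fderiv ℝ y x) :=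
      fderiv_comp x hL hy
    intro v
    rw [hgrad v, hchain]
    simp only [ContinuousLinearMap.coe_comp', Function.comp_apply,
      ContinuousLinearMap.smul_apply, ContinuousLinearMap.neg_apply,
      ContinuousLinearMap.coe_id', id_eq, innerSL_apply_apply, smul_eq_mul, map_neg]
    rw [← hgradL]
    field_simp
  refine ⟨_, hcomp, hform, ?_⟩
  intro hg0 v hv
  rw [hform, hform]
  have hng : (0:ℝ) < ‖g‖ := norm_pos_iff.2 hg0
  have h1 : ⟪g, ‖g‖⁻¹ • g⟫ = ‖g‖ := by
    rw [real_inner_smul_right, real_inner_self_eq_norm_sq]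
    field_simp
  have h2 : ⟪g, v⟫ ≤ ‖g‖ := by
    calc ⟪g, v⟫ ≤ ‖g‖ * ‖v‖ := real_inner_le_norm g v
      _ = ‖g‖ := by rw [hv, mul_one]
  rw [h1]
  have hd : (0:ℝ) ≤ 1 / ‖dy‖ := by positivity
  nlinarith
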